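/- Let (R_i, t_i) be a perfectoid tower arising from (R_0, I_0). Fix i ≥ 0 and an ideal J_i ⊆ R_i containing I_0R_i. Suppose J and J' are ideals of R_{i+1} each satisfying the two conditions: its p-th power equals J_iR_{i+1}, and the preimage ideal F_i^{-1}(J_i·(R_i/I_0R_i)) equals its image ideal in R_{i+1}/I_0R_{i+1}. Then J = J'. -/
import Mathlib


set_option synthInstance.maxHeartbeats 1000000
set_option maxHeartbeats 1000000
universe u

namespace PaperTower

variable {R : ℕ → Type u} [∀ i, CommRing (R i)]

/-- The set of `J`-torsion elements of a commutative ring. -/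
def torSet {A : Type*} [CommRing A] (J : Ideal A) : Set A :=
  {x | ∀ a ∈ J, ∃ n : ℕ, 0 < n ∧ a ^ n * x = 0}

/-- Cast ring homomorphism between quotients at equal indices. -/
def qcast (I : ∀ i, Ideal (R i)) {m n : ℕ} (h : m = n) :
    (R m ⧸ I m) →+* (R n ⧸ I n) := by subst h; exact RingHom.id _

/-- The `j`-th small tilt (inverse quasi-perfection) of a tower, as a subring of the
product of the quotients, consisting of sequences compatible with the Frobenius
projections `F`. -/
def Tilt (I : ∀ i, Ideal (R i))
    (F : ∀ i, (R (i + 1) ⧸ I (i + 1)) →+* (R i ⧸ I i)) (j : ℕ) :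
    Subring (∀ i, R (j + i) ⧸ I (j + i)) where
  carrier := {a | ∀ i, F (j + i) (a (i + 1)) = a i}
  zero_mem' := by
    intro i
    show F (j + i) 0 = 0
    simp
  one_mem' := by
    intro i
    show F (j + i) 1 = 1
    simp
  add_mem' := by
    intro a b ha hb i
    show F (j + i) (a (i + 1) + b (i + 1)) = a i + b i
    rw [map_add, ha i, hb i]
  mul_mem' := by
    intro a b ha hb i
    show F (j + i) (a (i + 1) * b (i + 1)) = a i * b i
    rw [map_mul, ha i, hb i]
  neg_mem' := by
    intro a ha i
    show F (j + i) (-(a (i + 1))) = -(a i)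
    rw [map_neg, ha i]

/-- The `m`-th projection `Φ^{(j)}_m` from the `j`-th small tilt. -/
def proj (I : ∀ i, Ideal (R i))
    (F : ∀ i, (R (i + 1) ⧸ I (i + 1)) →+* (R i ⧸ I i)) (j m : ℕ) :
    Tilt I F j →+* (R (j + m) ⧸ I (j + m)) :=
  (Pi.evalRingHom _ m).comp (Tilt I F j).subtype

/-- Uniqueness of the ideal `J ⊆ R_{i+1}` with `J^p = J_iR_{i+1}` and
`F_i^{-1}(J_i·(R_i/I₀R_i)) = J·(R_{i+1}/I₀R_{i+1})`, for a perfectoid tower. -/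
theorem stmt11 (p : ℕ) (hp : p.Prime)
    (R : ℕ → Type u) [∀ i, CommRing (R i)]
    (t : ∀ i, R i →+* R (i + 1))
    (I : ∀ i, Ideal (R i))
    (hpI : (p : R 0) ∈ I 0)
    (hIsucc : ∀ i, I (i + 1) = (I i).map (t i))
    (tbar : ∀ i, (R i ⧸ I i) →+* (R (i + 1) ⧸ I (i + 1)))
    (htbar : ∀ i (x : R i),
      tbar i (Ideal.Quotient.mk (I i) x) = Ideal.Quotient.mk (I (i + 1)) (t i x))
    (htbarInj : ∀ i, Function.Injective (tbar i))
    (F : ∀ i, (R (i + 1) ⧸ I (i + 1)) →+* (R i ⧸ I i))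
    (hF : ∀ i (x : R (i + 1) ⧸ I (i + 1)), tbar i (F i x) = x ^ p)
    (hFsurj : ∀ i, Function.Surjective (F i))
    (hJac : ∀ i, I i ≤ (⊥ : Ideal (R i)).jacobson)
    (hI0prin : (I 0).IsPrincipal)
    (I1e : ∀ i, Ideal (R (i + 1)))
    (hI1prin : (I1e 0).IsPrincipal)
    (hI1pow : I1e 0 ^ p = I 1)
    (hI1es : ∀ i, I1e (i + 1) = (I1e i).map (t (i + 1)))
    (hkerF : ∀ i, RingHom.ker (F i) = (I1e i).map (Ideal.Quotient.mk (I (i + 1))))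
    (htorz : ∀ i, ∀ a ∈ I i, ∀ x ∈ torSet (I i), a * x = 0)
    (hFtor : ∀ i, ∃ G : torSet (I (i + 1)) → torSet (I i), Function.Bijective G ∧
      ∀ x : torSet (I (i + 1)),
        Ideal.Quotient.mk (I i) (G x : R i) = F i (Ideal.Quotient.mk (I (i + 1)) (x : R (i + 1))))
    (i : ℕ) (Ji : Ideal (R i)) (hJi : I i ≤ Ji)
    (J J' : Ideal (R (i + 1)))
    (hJpow : J ^ p = Ji.map (t i))
    (hJpre : Ideal.comap (F i) (Ji.map (Ideal.Quotient.mk (I i)))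
      = J.map (Ideal.Quotient.mk (I (i + 1))))
    (hJ'pow : J' ^ p = Ji.map (t i))
    (hJ'pre : Ideal.comap (F i) (Ji.map (Ideal.Quotient.mk (I i)))
      = J'.map (Ideal.Quotient.mk (I (i + 1)))) :
    J = J' := by
  have key : ∀ K : Ideal (R (i+1)), K ^ p = Ji.map (t i) →
      Ideal.comap (Ideal.Quotient.mk (I (i+1))) (K.map (Ideal.Quotient.mk (I (i+1)))) = K := by
    intro K hK
    have hIK : I (i+1) ≤ K := by
      have h1 : K ^ p ≤ K := Ideal.pow_le_self hp.ne_zero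
      rw [hK] at h1
      rw [hIsucc i]
      exact le_trans (Ideal.map_mono hJi) h1
    rw [Ideal.comap_map_of_surjective _ Ideal.Quotient.mk_surjective,
      ← RingHom.ker_eq_comap_bot, Ideal.mk_ker, sup_eq_left.mpr hIK]
  have h := hJpre.symm.trans hJ'pre
  calc J = Ideal.comap (Ideal.Quotient.mk (I (i+1))) (J.map (Ideal.Quotient.mk (I (i+1)))) :=
        (key J hJpow).symm
    _ = Ideal.comap (Ideal.Quotient.mk (I (i+1))) (J'.map (Ideal.Quotient.mk (I (i+1)))) := by
        rw [h]
    _ = J' := key J' hJ'pow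


end PaperTower
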